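/- Let (α_k)_{k≥0} be a sequence of non-negative integers and let (X_k)_{k≥−3} be the associated vectors with denominators q_k. For every k ≥ 0 such that d(X̂_{k−1}, X̂_k ⊕ X̂_{k−2}) > 0, one has d(X̂_{k−1}, X̂_{k+1}) / d(X̂_{k−1}, X̂_k ⊕ X̂_{k−2}) = (q_{k−2} + q_k)/q_{k+1}; consequently, setting λ_k := (q_{k−2}+q_k)/q_{k+1}, it holds that 1 − λ_k = α_{k+1} · q_{k−1}/q_{k+1}. -/

import Mathlib

/-- The vectors X_{-3}, X_{-2}, X_{-1}, X_0, X_1, … (indices shifted by 3),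
with coordinates written as (q, p, r). -/
def Xv (a : ℕ → ℕ) : ℕ → ℤ × ℤ × ℤ
  | 0 => (0, 0, 1)
  | 1 => (1, 0, 0)
  | 2 => (1, 1, 0)
  | n + 3 => Xv a n + Xv a (n + 2) + (a n : ℤ) • Xv a (n + 1)

/-- The rational pair X̂ = (p/q, r/q) corresponding to the vector X = (q,p,r). -/
noncomputable def Xhat (v : ℤ × ℤ × ℤ) : ℝ × ℝ :=
  ((v.2.1 : ℝ) / (v.1 : ℝ), (v.2.2 : ℝ) / (v.1 : ℝ))

/-- Euclidean distance on ℝ². -/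
noncomputable def eucDist (a b : ℝ × ℝ) : ℝ :=
  Real.sqrt ((a.1 - b.1) ^ 2 + (a.2 - b.2) ^ 2)

lemma q_nonneg (a : ℕ → ℕ) : ∀ n, 0 ≤ (Xv a n).1
  | 0 => by simp [Xv]
  | 1 => by simp [Xv]
  | 2 => by simp [Xv]
  | n + 3 => by
      have h0 := q_nonneg a n
      have h1 := q_nonneg a (n + 1)
      have h2 := q_nonneg a (n + 2)
      have ha : (0 : ℤ) ≤ (a n : ℤ) := Int.natCast_nonneg _
      simp only [Xv, Prod.fst_add, Prod.smul_fst, smul_eq_mul]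
      nlinarith

lemma q_pos (a : ℕ → ℕ) : ∀ n, 0 < (Xv a (n + 1)).1
  | 0 => by simp [Xv]
  | 1 => by simp [Xv]
  | n + 2 => by
      have h0 := q_nonneg a n
      have h1 := q_nonneg a (n + 1)
      have h2 := q_pos a (n + 1)
      have ha : (0 : ℤ) ≤ (a n : ℤ) := Int.natCast_nonneg _
      show 0 < (Xv a (n + 3)).1
      simp only [Xv, Prod.fst_add, Prod.smul_fst, smul_eq_mul]
      nlinarith

theorem lambda_formula (a : ℕ → ℕ) (k : ℕ)
    (h : 0 < eucDist (Xhat (Xv a (k + 2))) (Xhat (Xv a (k + 3) + Xv a (k + 1)))) :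
    eucDist (Xhat (Xv a (k + 2))) (Xhat (Xv a (k + 4))) /
        eucDist (Xhat (Xv a (k + 2))) (Xhat (Xv a (k + 3) + Xv a (k + 1)))
      = (((Xv a (k + 1)).1 + (Xv a (k + 3)).1 : ℤ) : ℝ) / ((Xv a (k + 4)).1 : ℝ) ∧
    1 - (((Xv a (k + 1)).1 + (Xv a (k + 3)).1 : ℤ) : ℝ) / ((Xv a (k + 4)).1 : ℝ)
      = (a (k + 1) : ℝ) * ((Xv a (k + 2)).1 : ℝ) / ((Xv a (k + 4)).1 : ℝ) := by
  -- real coordinates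
  set q1 : ℝ := ((Xv a (k + 1)).1 : ℝ) with hq1
  set p1 : ℝ := ((Xv a (k + 1)).2.1 : ℝ) with hp1
  set r1 : ℝ := ((Xv a (k + 1)).2.2 : ℝ) with hr1
  set q2 : ℝ := ((Xv a (k + 2)).1 : ℝ) with hq2
  set p2 : ℝ := ((Xv a (k + 2)).2.1 : ℝ) with hp2
  set r2 : ℝ := ((Xv a (k + 2)).2.2 : ℝ) with hr2
  set q3 : ℝ := ((Xv a (k + 3)).1 : ℝ) with hq3
  set p3 : ℝ := ((Xv a (k + 3)).2.1 : ℝ) with hp3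
  set r3 : ℝ := ((Xv a (k + 3)).2.2 : ℝ) with hr3
  set c : ℝ := (a (k + 1) : ℝ) with hc
  have hrec : Xv a (k + 4) = Xv a (k + 1) + Xv a (k + 3) + (a (k + 1) : ℤ) • Xv a (k + 2) := by
    show Xv a ((k + 1) + 3) = _
    rw [Xv]
  have h4q : ((Xv a (k + 4)).1 : ℝ) = q1 + q3 + c * q2 := by
    rw [hrec]; simp only [Prod.fst_add, Prod.smul_fst, smul_eq_mul]; push_cast; ring
  have h4p : ((Xv a (k + 4)).2.1 : ℝ) = p1 + p3 + c * p2 := by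
    rw [hrec]; simp only [Prod.snd_add, Prod.fst_add, Prod.smul_snd, Prod.smul_fst,
      smul_eq_mul]; push_cast; ring
  have h4r : ((Xv a (k + 4)).2.2 : ℝ) = r1 + r3 + c * r2 := by
    rw [hrec]; simp only [Prod.snd_add, Prod.smul_snd, smul_eq_mul]; push_cast; ring
  have hYq : ((Xv a (k + 3) + Xv a (k + 1)).1 : ℝ) = q3 + q1 := by
    simp only [Prod.fst_add]; push_cast; ring
  have hYp : ((Xv a (k + 3) + Xv a (k + 1)).2.1 : ℝ) = p3 + p1 := by
    simp only [Prod.snd_add, Prod.fst_add]; push_cast; ring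
  have hYr : ((Xv a (k + 3) + Xv a (k + 1)).2.2 : ℝ) = r3 + r1 := by
    simp only [Prod.snd_add]; push_cast; ring
  -- positivity
  have hq1p : 0 < q1 := by rw [hq1]; exact_mod_cast q_pos a k
  have hq2p : 0 < q2 := by rw [hq2]; exact_mod_cast q_pos a (k + 1)
  have hq3p : 0 < q3 := by rw [hq3]; exact_mod_cast q_pos a (k + 2)
  have hcn : 0 ≤ c := by rw [hc]; positivity
  have hqY : 0 < q3 + q1 := by linarith
  have hq4 : 0 < q1 + q3 + c * q2 := by nlinarith
  set t : ℝ := (q3 + q1) / (q1 + q3 + c * q2) with ht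
  have htpos : 0 < t := div_pos hqY hq4
  -- the scaling of the two coordinate differences
  have hΔ1 : p2 / q2 - (p1 + p3 + c * p2) / (q1 + q3 + c * q2)
      = t * (p2 / q2 - (p3 + p1) / (q3 + q1)) := by
    rw [ht]; field_simp; ring
  have hΔ2 : r2 / q2 - (r1 + r3 + c * r2) / (q1 + q3 + c * q2)
      = t * (r2 / q2 - (r3 + r1) / (q3 + q1)) := by
    rw [ht]; field_simp; ring
  have hD : eucDist (Xhat (Xv a (k + 2))) (Xhat (Xv a (k + 4)))
      = t * eucDist (Xhat (Xv a (k + 2))) (Xhat (Xv a (k + 3) + Xv a (k + 1))) := by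
    unfold eucDist Xhat
    simp only [h4q, h4p, h4r, hYq, hYp, hYr, ← hq2, ← hp2, ← hr2]
    rw [hΔ1, hΔ2]
    rw [show (t * (p2 / q2 - (p3 + p1) / (q3 + q1))) ^ 2
        + (t * (r2 / q2 - (r3 + r1) / (q3 + q1))) ^ 2
        = t ^ 2 * ((p2 / q2 - (p3 + p1) / (q3 + q1)) ^ 2
          + (r2 / q2 - (r3 + r1) / (q3 + q1)) ^ 2) by ring]
    rw [Real.sqrt_mul (by positivity), Real.sqrt_sq htpos.le]
  constructor
  · rw [hD, mul_div_assoc, div_self (ne_of_gt h), mul_one, ht, h4q]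
    push_cast
    rw [← hq1, ← hq3]
    ring
  · rw [h4q]
    push_cast
    rw [← hq1, ← hq3]
    field_simp
    ring
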